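/- Let n ∈ ℕ and m ∈ ℕ ∪ {0} with n > m, and let Pₙ(t) = Σ_{i=m+1}^{n} aᵢ tⁱ − Σ_{i=0}^{m} aᵢ tⁱ, where aₙ > 0, aₘ > 0, and aᵢ ≥ 0 for all 0 ≤ i ≤ n−1 with i ≠ m. Then there exists a unique number t* ∈ (0, ∞) satisfying Pₙ(t*) = 0, and moreover Pₙ(t) < 0 for all t ∈ (0, t*) and Pₙ(t) > 0 for all t ∈ (t*, ∞). -/

import Mathlib

theorem poly_sign_change (n m : ℕ) (hmn : m < n) (a : ℕ → ℝ)
    (han : 0 < a n) (ham : 0 < a m)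
    (ha : ∀ i, i < n → i ≠ m → 0 ≤ a i)
    (P : ℝ → ℝ)
    (hP : ∀ t, P t = ∑ i ∈ Finset.Icc (m + 1) n, a i * t ^ i
                   - ∑ i ∈ Finset.Icc 0 m, a i * t ^ i) :
    ∃ t' : ℝ, 0 < t' ∧ P t' = 0 ∧
      (∀ s : ℝ, 0 < s → P s = 0 → s = t') ∧
      (∀ t : ℝ, 0 < t → t < t' → P t < 0) ∧
      (∀ t : ℝ, t' < t → 0 < P t) := by
  set g : ℝ → ℝ := fun t => (∑ i ∈ Finset.Icc (m + 1) n, a i * t ^ (i - m))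
      - ∑ i ∈ Finset.Icc 0 m, a i * (t⁻¹) ^ (m - i) with hg
  -- P t = t^m * g t for t > 0
  have hPg : ∀ t : ℝ, 0 < t → P t = t ^ m * g t := by
    intro t ht
    rw [hP, hg]
    simp only [mul_sub, Finset.mul_sum]
    congr 1
    · apply Finset.sum_congr rfl
      intro i hi
      simp only [Finset.mem_Icc] at hi
      have h1 : m ≤ i := le_trans (Nat.le_succ m) hi.1
      rw [show t ^ m * (a i * t ^ (i - m)) = a i * (t ^ m * t ^ (i - m)) by ring,
        pow_mul_pow_sub t h1]
    · apply Finset.sum_congr rfl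
      intro i hi
      simp only [Finset.mem_Icc] at hi
      have h1 : i ≤ m := hi.2
      have key : t ^ m * (t⁻¹) ^ (m - i) = t ^ i := by
        rw [inv_pow, mul_inv_eq_iff_eq_mul₀ (by positivity), ← pow_add,
          Nat.add_sub_cancel' h1]
      rw [show t ^ m * (a i * (t⁻¹) ^ (m - i)) = a i * (t ^ m * (t⁻¹) ^ (m - i)) by ring, key]
  -- g strictly monotone on (0, ∞)
  have hmono : StrictMonoOn g (Set.Ioi 0) := by
    intro x hx y hy hxy
    simp only [Set.mem_Ioi] at hx hy
    have h1 : (∑ i ∈ Finset.Icc (m + 1) n, a i * x ^ (i - m))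
        < ∑ i ∈ Finset.Icc (m + 1) n, a i * y ^ (i - m) := by
      apply Finset.sum_lt_sum
      · intro i hi
        simp only [Finset.mem_Icc] at hi
        have hai : 0 ≤ a i := by
          rcases eq_or_lt_of_le hi.2 with h | h
          · exact h ▸ han.le
          · exact ha i h (by omega)
        exact mul_le_mul_of_nonneg_left (pow_le_pow_left₀ hx.le hxy.le _) hai
      · refine ⟨n, ?_, ?_⟩
        · simp only [Finset.mem_Icc]; omega
        · exact mul_lt_mul_of_pos_left (pow_lt_pow_left₀ hxy hx.le (by omega)) han
    have h2 : (∑ i ∈ Finset.Icc 0 m, a i * (y⁻¹) ^ (m - i))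
        ≤ ∑ i ∈ Finset.Icc 0 m, a i * (x⁻¹) ^ (m - i) := by
      apply Finset.sum_le_sum
      intro i hi
      simp only [Finset.mem_Icc] at hi
      rcases eq_or_lt_of_le hi.2 with h | h
      · subst h; simp
      · have hai : 0 ≤ a i := ha i (by omega) (by omega)
        apply mul_le_mul_of_nonneg_left _ hai
        apply pow_le_pow_left₀ (by positivity)
        exact inv_anti₀ hx hxy.le
    show (∑ i ∈ Finset.Icc (m + 1) n, a i * x ^ (i - m))
        - (∑ i ∈ Finset.Icc 0 m, a i * (x⁻¹) ^ (m - i))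
        < (∑ i ∈ Finset.Icc (m + 1) n, a i * y ^ (i - m))
        - ∑ i ∈ Finset.Icc 0 m, a i * (y⁻¹) ^ (m - i)
    linarith
  -- continuity
  have hcont : ContinuousOn g (Set.Ioi 0) := by
    apply ContinuousOn.sub
    · apply continuousOn_finset_sum
      intro i _
      exact (continuous_const.mul (continuous_pow _)).continuousOn
    · apply continuousOn_finset_sum
      intro i _
      exact continuousOn_const.mul
        ((continuousOn_id.inv₀ (fun t ht => ne_of_gt ht)).pow _)
  set C : ℝ := ∑ i ∈ Finset.Icc (m + 1) n, a i with hCdef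
  set D : ℝ := ∑ i ∈ Finset.Icc 0 m, a i with hDdef
  have haIcc : ∀ i ∈ Finset.Icc (m + 1) n, 0 ≤ a i := by
    intro i hi
    simp only [Finset.mem_Icc] at hi
    rcases eq_or_lt_of_le hi.2 with h | h
    · exact h ▸ han.le
    · exact ha i h (by omega)
  have haIcc' : ∀ i ∈ Finset.Icc 0 m, 0 ≤ a i := by
    intro i hi
    simp only [Finset.mem_Icc] at hi
    rcases eq_or_lt_of_le hi.2 with h | h
    · exact h ▸ ham.le
    · exact ha i (by omega) (by omega)
  have hnmem : n ∈ Finset.Icc (m + 1) n := by simp only [Finset.mem_Icc]; omega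
  have hmmem : m ∈ Finset.Icc 0 m := by simp
  have hC : 0 < C := lt_of_lt_of_le han (Finset.single_le_sum haIcc hnmem)
  -- negative point
  set t0 : ℝ := min 1 (a m / (2 * C)) with ht0def
  have ht0pos : 0 < t0 := lt_min one_pos (by positivity)
  have ht0le1 : t0 ≤ 1 := min_le_left _ _
  have hgt0 : g t0 < 0 := by
    have hup : (∑ i ∈ Finset.Icc (m + 1) n, a i * t0 ^ (i - m)) ≤ C * t0 := by
      rw [hCdef, Finset.sum_mul]
      apply Finset.sum_le_sum
      intro i hi
      simp only [Finset.mem_Icc] at hi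
      have : t0 ^ (i - m) ≤ t0 ^ 1 :=
        pow_le_pow_of_le_one ht0pos.le ht0le1 (by omega)
      rw [pow_one] at this
      exact mul_le_mul_of_nonneg_left this (haIcc i (by simp only [Finset.mem_Icc]; omega))
    have hlow : a m ≤ ∑ i ∈ Finset.Icc 0 m, a i * (t0⁻¹) ^ (m - i) := by
      have := Finset.single_le_sum (f := fun i => a i * (t0⁻¹) ^ (m - i))
        (fun i hi => mul_nonneg (haIcc' i hi) (by positivity)) hmmem
      simpa using this
    have hCt0 : C * t0 ≤ a m / 2 := by
      have : t0 ≤ a m / (2 * C) := min_le_right _ _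
      calc C * t0 ≤ C * (a m / (2 * C)) := by nlinarith
        _ = a m / 2 := by field_simp
    show (∑ i ∈ Finset.Icc (m + 1) n, a i * t0 ^ (i - m))
        - (∑ i ∈ Finset.Icc 0 m, a i * (t0⁻¹) ^ (m - i)) < 0
    linarith
  -- positive point
  set t1 : ℝ := max 1 ((D + 1) / a n) with ht1def
  have ht1ge1 : (1 : ℝ) ≤ t1 := le_max_left _ _
  have ht1pos : 0 < t1 := lt_of_lt_of_le one_pos ht1ge1
  have hgt1 : 0 < g t1 := by
    have hlow : a n * t1 ≤ ∑ i ∈ Finset.Icc (m + 1) n, a i * t1 ^ (i - m) := by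
      have h1 : a n * t1 ≤ a n * t1 ^ (n - m) := by
        apply mul_le_mul_of_nonneg_left _ han.le
        calc t1 = t1 ^ 1 := (pow_one t1).symm
          _ ≤ t1 ^ (n - m) := pow_le_pow_right₀ ht1ge1 (by omega)
      refine le_trans h1 (Finset.single_le_sum (f := fun i => a i * t1 ^ (i - m))
        (fun i hi => mul_nonneg (haIcc i hi) (by positivity)) hnmem)
    have hup : (∑ i ∈ Finset.Icc 0 m, a i * (t1⁻¹) ^ (m - i)) ≤ D := by
      rw [hDdef]
      apply Finset.sum_le_sum
      intro i hi
      have hinv : (t1⁻¹ : ℝ) ^ (m - i) ≤ 1 :=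
        pow_le_one₀ (by positivity) (inv_le_one_of_one_le₀ ht1ge1)
      calc a i * (t1⁻¹) ^ (m - i) ≤ a i * 1 :=
            mul_le_mul_of_nonneg_left hinv (haIcc' i hi)
        _ = a i := mul_one _
    have ht1ge : (D + 1) / a n ≤ t1 := le_max_right _ _
    have : D + 1 ≤ a n * t1 := by
      rw [← div_le_iff₀' han] at *
      linarith [ht1ge]
    show 0 < (∑ i ∈ Finset.Icc (m + 1) n, a i * t1 ^ (i - m))
        - ∑ i ∈ Finset.Icc 0 m, a i * (t1⁻¹) ^ (m - i)
    linarith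
  have ht01 : t0 ≤ t1 := le_trans ht0le1 ht1ge1
  have hsub : Set.Icc t0 t1 ⊆ Set.Ioi 0 := fun x hx => lt_of_lt_of_le ht0pos hx.1
  obtain ⟨t', hmem, hgt'⟩ := intermediate_value_Icc ht01 (hcont.mono hsub)
    ⟨hgt0.le, hgt1.le⟩
  have ht'pos : 0 < t' := lt_of_lt_of_le ht0pos hmem.1
  have hgs0 : ∀ s : ℝ, 0 < s → P s = 0 → g s = 0 := by
    intro s hs hPs
    have h := (hPg s hs).symm.trans hPs
    rcases mul_eq_zero.mp h with h' | h'
    · exact absurd h' (by positivity)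
    · exact h'
  refine ⟨t', ht'pos, ?_, ?_, ?_, ?_⟩
  · rw [hPg t' ht'pos, hgt', mul_zero]
  · intro s hs hPs
    have hgs := hgs0 s hs hPs
    by_contra hne
    rcases lt_or_gt_of_ne hne with h | h
    · have := hmono (Set.mem_Ioi.mpr hs) (Set.mem_Ioi.mpr ht'pos) h
      rw [hgs, hgt'] at this
      exact lt_irrefl _ this
    · have := hmono (Set.mem_Ioi.mpr ht'pos) (Set.mem_Ioi.mpr hs) h
      rw [hgs, hgt'] at this
      exact lt_irrefl _ this
  · intro t ht htt'
    have h := hmono (Set.mem_Ioi.mpr ht) (Set.mem_Ioi.mpr ht'pos) htt'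
    rw [hgt'] at h
    rw [hPg t ht]
    exact mul_neg_of_pos_of_neg (by positivity) h
  · intro t ht
    have ht0' : 0 < t := ht'pos.trans ht
    have h := hmono (Set.mem_Ioi.mpr ht'pos) (Set.mem_Ioi.mpr ht0') ht
    rw [hgt'] at h
    rw [hPg t ht0']
    exact mul_pos (by positivity) h
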